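/- There exists a Friedrichs constant C_fr > 0 such that |v|_M ≤ C_fr |v|_L for all v ∈ V. -/

import Mathlib

open Finset

variable {n : ℕ} {N : Type*}

/-- The (edge-weighted) mass bilinear form `(M_S u, v)`. -/
noncomputable def Mform [Fintype N] (G : SimpleGraph N) [DecidableRel G.Adj]
    (pos : N → EuclideanSpace ℝ (Fin n)) (α : ℝ) (S : Finset N) (u v : N → ℝ) : ℝ :=
  ∑ x ∈ S, (1 / 2 : ℝ) * ∑ y ∈ G.neighborFinset x,
    dist (pos x) (pos y) ^ ((2 : ℝ) - α) * (u x * v x)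

/-- The (edge-weighted) stiffness bilinear form `(L_S u, v)`. -/
noncomputable def Lform [Fintype N] (G : SimpleGraph N) [DecidableRel G.Adj]
    (pos : N → EuclideanSpace ℝ (Fin n)) (α : ℝ) (S : Finset N) (u v : N → ℝ) : ℝ :=
  ∑ x ∈ S, (1 / 2 : ℝ) * ∑ y ∈ G.neighborFinset x,
    ((u x - u y) * (v x - v y)) / dist (pos x) (pos y) ^ α

/-- `|v|_{M,S}`. -/
noncomputable def Mnorm [Fintype N] (G : SimpleGraph N) [DecidableRel G.Adj]
    (pos : N → EuclideanSpace ℝ (Fin n)) (α : ℝ) (S : Finset N) (v : N → ℝ) : ℝ :=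
  Real.sqrt (Mform G pos α S v v)

/-- `|v|_{L,S}`. -/
noncomputable def Lnorm [Fintype N] (G : SimpleGraph N) [DecidableRel G.Adj]
    (pos : N → EuclideanSpace ℝ (Fin n)) (α : ℝ) (S : Finset N) (v : N → ℝ) : ℝ :=
  Real.sqrt (Lform G pos α S v v)

/-- The element average `q_T(v) = (M_T v, 1) / |1|_{M,T}^2`. -/
noncomputable def avg [Fintype N] (G : SimpleGraph N) [DecidableRel G.Adj]
    (pos : N → EuclideanSpace ℝ (Fin n)) (α : ℝ) (T : Finset N) (v : N → ℝ) : ℝ :=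
  Mform G pos α T v (fun _ => 1) / Mform G pos α T (fun _ => 1) (fun _ => 1)

/-- Euclidean inner product of functions on the node set. -/
noncomputable def ip [Fintype N] (u v : N → ℝ) : ℝ := ∑ x, u x * v x

/-- Length of a walk: the sum of Euclidean edge lengths. -/
noncomputable def wlen (G : SimpleGraph N) (pos : N → EuclideanSpace ℝ (Fin n))
    {x y : N} (w : G.Walk x y) : ℝ :=
  (w.darts.map (fun d => dist (pos d.toProd.1) (pos d.toProd.2))).sum

/-- Graph distance from `x` to the boundary set `bnd`, along paths inside `T`. -/
noncomputable def distT (G : SimpleGraph N) (pos : N → EuclideanSpace ℝ (Fin n))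
    (T bnd : Finset N) (x : N) : ℝ :=
  sInf {ℓ : ℝ | ∃ y ∈ bnd, ∃ w : G.Walk x y, (∀ z ∈ w.support, z ∈ T) ∧ ℓ = wlen G pos w}

/-- The non-normalized bubble function `b̃_T`. -/
noncomputable def btilde [DecidableEq N] (G : SimpleGraph N) (pos : N → EuclideanSpace ℝ (Fin n))
    (T bnd : Finset N) : N → ℝ :=
  fun x => if x ∈ T then distT G pos T bnd x else 0
lemma Mform_diag [Fintype N] (G : SimpleGraph N) [DecidableRel G.Adj]
    (pos : N → EuclideanSpace ℝ (Fin n)) (α : ℝ) (v : N → ℝ) :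
    Mform G pos α Finset.univ v v
      = ∑ x, ((1 / 2 : ℝ) * ∑ y ∈ G.neighborFinset x,
          dist (pos x) (pos y) ^ ((2 : ℝ) - α)) * v x ^ 2 := by
  unfold Mform
  refine Finset.sum_congr rfl fun x _ => ?_
  rw [← Finset.sum_mul]
  ring

lemma Lform_diag [Fintype N] (G : SimpleGraph N) [DecidableRel G.Adj]
    (pos : N → EuclideanSpace ℝ (Fin n)) (α : ℝ) (v : N → ℝ) :
    Lform G pos α Finset.univ v v
      = ∑ x, (1 / 2 : ℝ) * ∑ y ∈ G.neighborFinset x,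
          (v x - v y) ^ 2 / dist (pos x) (pos y) ^ α := by
  unfold Lform
  refine Finset.sum_congr rfl fun x _ => ?_
  congr 1
  refine Finset.sum_congr rfl fun y _ => ?_
  ring

lemma walk_eq_of_adj_eq {N : Type*} (G : SimpleGraph N) (v : N → ℝ)
    (h : ∀ x y, G.Adj x y → v x = v y) {x y : N} (w : G.Walk x y) : v x = v y := by
  induction w with
  | nil => rfl
  | cons h' _ ih => exact (h _ _ h').trans ih

lemma nbr_nonempty [Fintype N] (G : SimpleGraph N) [DecidableRel G.Adj]
    (hcard : 1 < Fintype.card N) (hconn : G.Connected) (x : N) :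
    (G.neighborFinset x).Nonempty := by
  obtain ⟨y, hy⟩ := Fintype.exists_ne_of_one_lt_card hcard x
  obtain ⟨w⟩ := hconn.preconnected x y
  cases w with
  | nil => exact absurd rfl hy
  | @cons _ b _ h p => exact ⟨b, (G.mem_neighborFinset x b).2 h⟩

theorem stmt1 [Fintype N] [DecidableEq N] (G : SimpleGraph N) [DecidableRel G.Adj]
    (pos : N → EuclideanSpace ℝ (Fin n)) (α : ℝ)
    (hα : 0 ≤ α ∧ α ≤ 2) (hpos : Function.Injective pos)
    (hdist : ∀ x y : N, G.Adj x y → 0 < dist (pos x) (pos y))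
    (hcard : 1 < Fintype.card N) (hconn : G.Connected)
    (Γ : Set N) (hΓ : Γ.Nonempty) :
    ∃ Cfr : ℝ, 0 < Cfr ∧ ∀ v : N → ℝ, (∀ x ∈ Γ, v x = 0) →
      Mnorm G pos α Finset.univ v ≤ Cfr * Lnorm G pos α Finset.univ v := by
  classical
  obtain ⟨γ, hγ⟩ := hΓ
  set wgt : N → ℝ := fun x =>
    (1 / 2 : ℝ) * ∑ y ∈ G.neighborFinset x, dist (pos x) (pos y) ^ ((2 : ℝ) - α) with hwgt
  have hw_pos : ∀ x, 0 < wgt x := by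
    intro x
    have hsum : 0 < ∑ y ∈ G.neighborFinset x, dist (pos x) (pos y) ^ ((2 : ℝ) - α) :=
      Finset.sum_pos
        (fun y hy => Real.rpow_pos_of_pos (hdist x y ((G.mem_neighborFinset x y).1 hy)) _)
        (nbr_nonempty G hcard hconn x)
    simpa [hwgt] using by linarith
  set Mq : (N → ℝ) → ℝ := fun v => Mform G pos α Finset.univ v v with hMqdef
  set Lq : (N → ℝ) → ℝ := fun v => Lform G pos α Finset.univ v v with hLqdef
  have hMq_eq : ∀ v, Mq v = ∑ x, wgt x * v x ^ 2 := fun v => Mform_diag G pos α v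
  have hLq_eq : ∀ v, Lq v = ∑ x, (1 / 2 : ℝ) * ∑ y ∈ G.neighborFinset x,
      (v x - v y) ^ 2 / dist (pos x) (pos y) ^ α := fun v => Lform_diag G pos α v
  have hMq_nonneg : ∀ v, 0 ≤ Mq v := by
    intro v; rw [hMq_eq]
    exact Finset.sum_nonneg fun x _ => mul_nonneg (hw_pos x).le (sq_nonneg _)
  have hLq_inner_nonneg : ∀ (v : N → ℝ) (x y : N),
      0 ≤ (v x - v y) ^ 2 / dist (pos x) (pos y) ^ α := fun v x y =>
    div_nonneg (sq_nonneg _) (Real.rpow_nonneg dist_nonneg _)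
  have hLq_nonneg : ∀ v, 0 ≤ Lq v := by
    intro v; rw [hLq_eq]
    exact Finset.sum_nonneg fun x _ => mul_nonneg (by norm_num)
      (Finset.sum_nonneg fun y _ => hLq_inner_nonneg v x y)
  have hMq_smul : ∀ (c : ℝ) (v : N → ℝ), Mq (fun x => c * v x) = c ^ 2 * Mq v := by
    intro c v
    rw [hMq_eq, hMq_eq, Finset.mul_sum]
    exact Finset.sum_congr rfl fun x _ => by ring
  have hLq_smul : ∀ (c : ℝ) (v : N → ℝ), Lq (fun x => c * v x) = c ^ 2 * Lq v := by
    intro c v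
    rw [hLq_eq, hLq_eq, Finset.mul_sum]
    refine Finset.sum_congr rfl fun x _ => ?_
    rw [Finset.mul_sum, Finset.mul_sum, Finset.mul_sum]
    refine Finset.sum_congr rfl fun y _ => ?_
    ring
  -- Lq v = 0 implies v is constant on edges
  have hLq_zero : ∀ v : N → ℝ, Lq v = 0 → ∀ x y, G.Adj x y → v x = v y := by
    intro v h x y hxy
    rw [hLq_eq] at h
    have houter := (Finset.sum_eq_zero_iff_of_nonneg fun x _ => mul_nonneg (by norm_num)
      (Finset.sum_nonneg fun y _ => hLq_inner_nonneg v x y)).1 h x (Finset.mem_univ x)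
    have hsum0 : ∑ y ∈ G.neighborFinset x, (v x - v y) ^ 2 / dist (pos x) (pos y) ^ α = 0 := by
      linarith
    have hterm := (Finset.sum_eq_zero_iff_of_nonneg fun y _ => hLq_inner_nonneg v x y).1
      hsum0 y ((G.mem_neighborFinset x y).2 hxy)
    have hd : dist (pos x) (pos y) ^ α ≠ 0 := (Real.rpow_pos_of_pos (hdist x y hxy) _).ne'
    have : (v x - v y) ^ 2 = 0 := by
      rcases div_eq_zero_iff.1 hterm with h' | h'
      · exact h'
      · exact absurd h' hd
    have := pow_eq_zero_iff (n := 2) (by norm_num) |>.1 this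
    linarith
  -- the constraint set
  set K : Set (N → ℝ) := {v | (∀ x ∈ Γ, v x = 0) ∧ Mq v = 1} with hK
  -- membership construction from nonzero Mq
  have hscale : ∀ v : N → ℝ, (∀ x ∈ Γ, v x = 0) → Mq v ≠ 0 →
      (fun x => (1 / Real.sqrt (Mq v)) * v x) ∈ K := by
    intro v hv h0
    have hMv : 0 < Mq v := lt_of_le_of_ne (hMq_nonneg v) (Ne.symm h0)
    have ht : (0 : ℝ) < Real.sqrt (Mq v) := Real.sqrt_pos.2 hMv
    constructor
    · intro x hx; simp [hv x hx]
    · rw [hMq_smul]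
      have : Real.sqrt (Mq v) ^ 2 = Mq v := Real.sq_sqrt hMv.le
      field_simp
      linarith
  by_cases hKne : K.Nonempty
  · -- compactness argument
    have hcontM : Continuous Mq := by
      have : Mq = fun v : N → ℝ => ∑ x, wgt x * v x ^ 2 := funext hMq_eq
      rw [this]
      exact continuous_finset_sum _ fun x _ =>
        continuous_const.mul ((continuous_apply x).pow 2)
    have hcontL : Continuous Lq := by
      have : Lq = fun v : N → ℝ => ∑ x, (1 / 2 : ℝ) * ∑ y ∈ G.neighborFinset x,
          (v x - v y) ^ 2 / dist (pos x) (pos y) ^ α := funext hLq_eq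
      rw [this]
      exact continuous_finset_sum _ fun x _ => continuous_const.mul
        (continuous_finset_sum _ fun y _ =>
          (((continuous_apply x).sub (continuous_apply y)).pow 2).div_const _)
    have hclosed : IsClosed K := by
      have : K = (⋂ x ∈ Γ, {v : N → ℝ | v x = 0}) ∩ Mq ⁻¹' {1} := by
        ext v; simp [hK, Set.mem_iInter]
      rw [this]
      exact (isClosed_biInter fun x _ =>
        isClosed_eq (continuous_apply x) continuous_const).inter
        (isClosed_singleton.preimage hcontM)
    -- boundedness
    have hNne : Nonempty N := Fintype.card_pos_iff.mp (by omega)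
    set ε : ℝ := Finset.univ.inf' Finset.univ_nonempty wgt with hε
    have hε_pos : 0 < ε := by
      obtain ⟨x, _, hx⟩ := Finset.exists_mem_eq_inf' Finset.univ_nonempty wgt
      rw [hε, hx]; exact hw_pos x
    set R : ℝ := Real.sqrt (1 / ε) with hR
    have hR_nonneg : 0 ≤ R := Real.sqrt_nonneg _
    have hbdd : Bornology.IsBounded K := by
      refine (Metric.isBounded_iff_subset_closedBall 0).2 ⟨R, fun v hv => ?_⟩
      rw [Metric.mem_closedBall]
      rw [dist_pi_le_iff hR_nonneg]
      intro x
      have hvx2 : v x ^ 2 ≤ 1 / ε := by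
        have h1 : wgt x * v x ^ 2 ≤ Mq v := by
          rw [hMq_eq]
          exact Finset.single_le_sum
            (fun y _ => mul_nonneg (hw_pos y).le (sq_nonneg _)) (Finset.mem_univ x)
        have hεle : ε ≤ wgt x := Finset.inf'_le wgt (Finset.mem_univ x)
        have h2 : ε * v x ^ 2 ≤ 1 := by
          rw [hv.2] at h1
          nlinarith [sq_nonneg (v x)]
        rw [le_div_iff₀ hε_pos]
        linarith
      have : |v x| ≤ R := by
        rw [hR, ← Real.sqrt_sq_eq_abs]
        exact Real.sqrt_le_sqrt hvx2
      simpa [Real.dist_eq] using this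
    have hcpt : IsCompact K := Metric.isCompact_of_isClosed_isBounded hclosed hbdd
    obtain ⟨v₀, hv₀K, hmin⟩ := hcpt.exists_isMinOn hKne hcontL.continuousOn
    set m : ℝ := Lq v₀ with hm
    have hm_pos : 0 < m := by
      rcases lt_or_eq_of_le (hLq_nonneg v₀) with h | h
      · exact h
      · exfalso
        have hconst := hLq_zero v₀ h.symm
        have hzero : ∀ x, v₀ x = 0 := by
          intro x
          obtain ⟨w⟩ := hconn.preconnected x γ
          have := walk_eq_of_adj_eq G v₀ hconst w
          rw [this, hv₀K.1 γ hγ]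
        have : Mq v₀ = 0 := by
          rw [hMq_eq]
          exact Finset.sum_eq_zero fun x _ => by rw [hzero x]; ring
        rw [hv₀K.2] at this
        norm_num at this
    refine ⟨1 / Real.sqrt m, by positivity, ?_⟩
    intro v hv
    have hsm : (0 : ℝ) < Real.sqrt m := Real.sqrt_pos.2 hm_pos
    rcases eq_or_ne (Mq v) 0 with h0 | h0
    · have hM0 : Mnorm G pos α Finset.univ v = 0 := by
        show Real.sqrt (Mq v) = 0
        rw [h0, Real.sqrt_zero]
      rw [hM0]
      have hLn : 0 ≤ Lnorm G pos α Finset.univ v := Real.sqrt_nonneg _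
      positivity
    · have hMv : 0 < Mq v := lt_of_le_of_ne (hMq_nonneg v) (Ne.symm h0)
      set t : ℝ := Real.sqrt (Mq v) with htdef
      have ht : (0 : ℝ) < t := Real.sqrt_pos.2 hMv
      have ht2 : t ^ 2 = Mq v := Real.sq_sqrt hMv.le
      have huK := hscale v hv h0
      have hmle : m ≤ Lq (fun x => (1 / t) * v x) := hmin huK
      rw [hLq_smul] at hmle
      have hLv : m * t ^ 2 ≤ Lq v := by
        calc m * t ^ 2 ≤ (1 / t) ^ 2 * Lq v * t ^ 2 :=
              mul_le_mul_of_nonneg_right hmle (sq_nonneg t)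
          _ = Lq v := by field_simp
      have h1 : Real.sqrt m * t ≤ Real.sqrt (Lq v) := by
        calc Real.sqrt m * t = Real.sqrt (m * t ^ 2) := by
              rw [Real.sqrt_mul hm_pos.le, Real.sqrt_sq ht.le]
          _ ≤ Real.sqrt (Lq v) := Real.sqrt_le_sqrt hLv
      have hgoal : t ≤ 1 / Real.sqrt m * Real.sqrt (Lq v) := by
        rw [one_div, inv_mul_eq_div, le_div_iff₀ hsm]
        linarith [h1]
      exact hgoal
  · -- K empty: every admissible v has Mq v = 0
    refine ⟨1, one_pos, ?_⟩
    intro v hv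
    have h0 : Mq v = 0 := by
      by_contra h0
      exact hKne ⟨_, hscale v hv h0⟩
    have hM0 : Mnorm G pos α Finset.univ v = 0 := by
      show Real.sqrt (Mq v) = 0
      rw [h0, Real.sqrt_zero]
    rw [hM0, one_mul]
    exact Real.sqrt_nonneg _
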